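/- Let $q = \sum_{\alpha} a_\alpha Z_\alpha$ be a positive regular noncommutative polynomial and for $m \geq 1$ define the coefficients $b^{(m)}_{g_0} = 1$ and $b^{(m)}_\alpha = \sum_{j=1}^{|\alpha|} \sum_{\gamma_1 \cdots \gamma_j = \alpha, |\gamma_i| \geq 1} a_{\gamma_1} \cdots a_{\gamma_j} \binom{j+m-1}{m-1}$ for $|\alpha| \geq 1$. Then for all words $\alpha, \beta$ in the free semigroup $\mathbb{F}_n^+$, one has $b^{(m)}_\alpha b^{(m)}_\beta \leq \binom{|\beta|+m-1}{m-1} b^{(m)}_{\alpha\beta}$. -/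

import Mathlib

set_option maxHeartbeats 1000000

open scoped BigOperators

private lemma splitAux_append {A : Type*} (β : List A) (ms : List ℕ) :
    ∀ (l : List A) (ns : List ℕ), ns.sum = l.length →
      List.splitWrtCompositionAux (l ++ β) (ns ++ ms) =
        List.splitWrtCompositionAux l ns ++ List.splitWrtCompositionAux β ms := by
  intro l ns
  induction ns generalizing l with
  | nil =>
    intro h
    have : l = [] := by
      apply List.eq_nil_of_length_eq_zero
      simp at h; omega
    subst this
    simp [List.splitWrtCompositionAux]
  | cons n ns ih =>
    intro h
    simp only [List.sum_cons] at h
    have hn : n ≤ l.length := by omega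
    simp only [List.cons_append, List.splitWrtCompositionAux, List.splitAt_eq]
    rw [List.take_append_of_le_length hn, List.drop_append_of_le_length hn]
    rw [ih (l.drop n) (by simp; omega)]

private lemma pos_prefix_eq : ∀ (l1 : List ℕ) (l1' l2 l2' : List ℕ),
    (∀ x ∈ l1, 0 < x) → (∀ x ∈ l1', 0 < x) → l1.sum = l1'.sum →
    l1 ++ l2 = l1' ++ l2' → l1 = l1' := by
  intro l1
  induction l1 with
  | nil =>
    intro l1' l2 l2' _ h1' hs _
    cases l1' with
    | nil => rfl
    | cons a t =>
      exfalso
      have := h1' a (by simp)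
      simp [List.sum_cons] at hs
      have : t.sum = 0 := by omega
      omega
  | cons a t ih =>
    intro l1' l2 l2' h1 h1' hs happ
    cases l1' with
    | nil =>
      exfalso
      have := h1 a (by simp)
      simp at hs
      omega
    | cons a' t' =>
      simp only [List.cons_append, List.cons.injEq] at happ
      obtain ⟨rfl, happ⟩ := happ
      simp only [List.sum_cons] at hs
      have := ih t' l2 l2' (fun x hx => h1 x (by simp [hx]))
        (fun x hx => h1' x (by simp [hx])) (by omega) happ
      rw [this]

/-- Append two compositions. -/
private def compAppend {p q r : ℕ} (h : p + q = r) (c : Composition p) (d : Composition q) :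
    Composition r where
  blocks := c.blocks ++ d.blocks
  blocks_pos := by
    intro i hi
    rcases List.mem_append.1 hi with h' | h'
    · exact c.blocks_pos h'
    · exact d.blocks_pos h'
  blocks_sum := by simp [c.blocks_sum, d.blocks_sum, h]

/-- The coefficients `b^(m)_α` associated with a positive regular noncommutative
polynomial with coefficients `a`: `b_{g₀} = 1` and for `|α| ≥ 1`,
`b_α = ∑_{j=1}^{|α|} ∑_{γ₁⋯γ_j = α, |γ_i| ≥ 1} a_{γ₁}⋯a_{γ_j} * C(j+m-1, m-1)`,
realized as a sum over all compositions of `α.length`. -/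
noncomputable def bcoef (n m : ℕ) (a : List (Fin n) → ℝ) (α : List (Fin n)) : ℝ :=
  if α = [] then 1 else
    ∑ c : Composition α.length,
      ((c.length + m - 1).choose (m - 1) : ℝ) * ((α.splitWrtComposition c).map a).prod

private lemma bcoef_nonneg (n m : ℕ) (a : List (Fin n) → ℝ) (ha0 : ∀ α, 0 ≤ a α)
    (α : List (Fin n)) : 0 ≤ bcoef n m a α := by
  unfold bcoef
  split
  · norm_num
  · apply Finset.sum_nonneg
    intro c _
    apply mul_nonneg (by positivity)
    apply List.prod_nonneg
    intro x hx
    simp only [List.mem_map] at hx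
    obtain ⟨γ, _, rfl⟩ := hx
    exact ha0 γ

theorem stmt0 (n m : ℕ) (hm : 1 ≤ m) (a : List (Fin n) → ℝ)
    (ha0 : ∀ α, 0 ≤ a α) (hae : a [] = 0) (hag : ∀ i : Fin n, 0 < a [i])
    (α β : List (Fin n)) :
    bcoef n m a α * bcoef n m a β ≤
      ((β.length + m - 1).choose (m - 1) : ℝ) * bcoef n m a (α ++ β) := by
  classical
  have hprodnn : ∀ (γ : List (Fin n)) (c : Composition γ.length),
      (0:ℝ) ≤ ((γ.splitWrtComposition c).map a).prod := by
    intro γ c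
    apply List.prod_nonneg
    intro x hx
    simp only [List.mem_map] at hx
    obtain ⟨γ', _, rfl⟩ := hx
    exact ha0 γ'
  rcases eq_or_ne α [] with rfl | hα
  · rw [List.nil_append]
    rw [show bcoef n m a [] = 1 by simp [bcoef]]
    rw [one_mul]
    have h1 : (1:ℝ) ≤ ((β.length + m - 1).choose (m - 1) : ℝ) := by
      have := Nat.choose_pos (n := β.length + m - 1) (k := m - 1) (by omega)
      exact_mod_cast this
    nlinarith [bcoef_nonneg n m a ha0 β]
  rcases eq_or_ne β [] with rfl | hβ
  · rw [List.append_nil]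
    rw [show bcoef n m a [] = 1 by simp [bcoef]]
    simp [Nat.choose_self]
  -- main case
  unfold bcoef
  rw [if_neg hα, if_neg hβ, if_neg (by simp [hα])]
  set C : ℝ := ((β.length + m - 1).choose (m - 1) : ℝ) with hC
  have hlen : α.length + β.length = (α ++ β).length := by simp
  set F : Composition α.length × Composition β.length → Composition (α ++ β).length :=
    fun p => compAppend hlen p.1 p.2 with hF
  have hFinj : Function.Injective F := by
    intro p p' h
    have hblocks : p.1.blocks ++ p.2.blocks = p'.1.blocks ++ p'.2.blocks := by
      have := congrArg Composition.blocks h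
      simpa [hF, compAppend] using this
    have h1 : p.1.blocks = p'.1.blocks :=
      pos_prefix_eq _ _ _ _ (fun x hx => p.1.blocks_pos hx) (fun x hx => p'.1.blocks_pos hx)
        (by rw [p.1.blocks_sum, p'.1.blocks_sum]) hblocks
    have h2 : p.2.blocks = p'.2.blocks := by
      rw [h1] at hblocks
      exact List.append_cancel_left hblocks
    obtain ⟨c, d⟩ := p; obtain ⟨c', d'⟩ := p'
    simp only [Prod.mk.injEq]
    exact ⟨Composition.ext h1, Composition.ext h2⟩
  have hsplit : ∀ (p : Composition α.length × Composition β.length),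
      (α ++ β).splitWrtComposition (F p) =
        α.splitWrtComposition p.1 ++ β.splitWrtComposition p.2 := by
    intro p
    show List.splitWrtCompositionAux (α ++ β) (p.1.blocks ++ p.2.blocks) = _
    exact splitAux_append β p.2.blocks α p.1.blocks p.1.blocks_sum
  have hFlen : ∀ (p : Composition α.length × Composition β.length),
      (F p).length = p.1.length + p.2.length := by
    intro p
    simp [hF, compAppend, Composition.length]
  rw [Finset.sum_mul_sum]
  have key : ∀ c : Composition α.length, ∀ d : Composition β.length,
      (((c.length + m - 1).choose (m - 1) : ℝ) * ((α.splitWrtComposition c).map a).prod) *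
        (((d.length + m - 1).choose (m - 1) : ℝ) * ((β.splitWrtComposition d).map a).prod) ≤
      C * ((((F (c, d)).length + m - 1).choose (m - 1) : ℝ) *
        (((α ++ β).splitWrtComposition (F (c, d))).map a).prod) := by
    intro c d
    rw [hsplit (c, d), hFlen (c, d), List.map_append, List.prod_append]
    have hbin : ((c.length + m - 1).choose (m - 1) : ℝ) *
        ((d.length + m - 1).choose (m - 1) : ℝ) ≤
        C * ((c.length + d.length + m - 1).choose (m - 1) : ℝ) := by
      have h1 : (c.length + m - 1).choose (m - 1) ≤
          (c.length + d.length + m - 1).choose (m - 1) :=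
        Nat.choose_le_choose _ (by omega)
      have h2 : (d.length + m - 1).choose (m - 1) ≤ (β.length + m - 1).choose (m - 1) :=
        Nat.choose_le_choose _ (by have := d.length_le; omega)
      calc ((c.length + m - 1).choose (m - 1) : ℝ) * ((d.length + m - 1).choose (m - 1) : ℝ)
          ≤ ((c.length + d.length + m - 1).choose (m - 1) : ℝ) *
            ((β.length + m - 1).choose (m - 1) : ℝ) := by
            apply mul_le_mul (by exact_mod_cast h1) (by exact_mod_cast h2) (by positivity)
              (by positivity)
        _ = C * ((c.length + d.length + m - 1).choose (m - 1) : ℝ) := by ring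
    have pα := hprodnn α c
    have pβ := hprodnn β d
    calc (((c.length + m - 1).choose (m - 1) : ℝ) * ((α.splitWrtComposition c).map a).prod) *
          (((d.length + m - 1).choose (m - 1) : ℝ) * ((β.splitWrtComposition d).map a).prod)
        = (((c.length + m - 1).choose (m - 1) : ℝ) * ((d.length + m - 1).choose (m - 1) : ℝ)) *
          (((α.splitWrtComposition c).map a).prod * ((β.splitWrtComposition d).map a).prod) := by
          ring
      _ ≤ (C * ((c.length + d.length + m - 1).choose (m - 1) : ℝ)) *
          (((α.splitWrtComposition c).map a).prod * ((β.splitWrtComposition d).map a).prod) := by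
          apply mul_le_mul_of_nonneg_right hbin (by positivity)
      _ = C * (((c.length + d.length + m - 1).choose (m - 1) : ℝ) *
          (((α.splitWrtComposition c).map a).prod * ((β.splitWrtComposition d).map a).prod)) := by
          ring
  calc ∑ c : Composition α.length, ∑ d : Composition β.length,
        (((c.length + m - 1).choose (m - 1) : ℝ) * ((α.splitWrtComposition c).map a).prod) *
          (((d.length + m - 1).choose (m - 1) : ℝ) * ((β.splitWrtComposition d).map a).prod)
      ≤ ∑ c : Composition α.length, ∑ d : Composition β.length,
        C * ((((F (c, d)).length + m - 1).choose (m - 1) : ℝ) *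
          (((α ++ β).splitWrtComposition (F (c, d))).map a).prod) := by
        apply Finset.sum_le_sum; intro c _
        apply Finset.sum_le_sum; intro d _
        exact key c d
    _ = C * ∑ p : Composition α.length × Composition β.length,
        ((((F p).length + m - 1).choose (m - 1) : ℝ) *
          (((α ++ β).splitWrtComposition (F p)).map a).prod) := by
        rw [← Finset.sum_product', Finset.mul_sum]
        rfl
    _ ≤ C * ∑ e : Composition (α ++ β).length,
        (((e.length + m - 1).choose (m - 1) : ℝ) *
          (((α ++ β).splitWrtComposition e).map a).prod) := by
        apply mul_le_mul_of_nonneg_left _ (by positivity)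
        have himg : ∑ p : Composition α.length × Composition β.length,
            ((((F p).length + m - 1).choose (m - 1) : ℝ) *
              (((α ++ β).splitWrtComposition (F p)).map a).prod)
            = ∑ e ∈ Finset.univ.image F,
            (((e.length + m - 1).choose (m - 1) : ℝ) *
              (((α ++ β).splitWrtComposition e).map a).prod) :=
          (Finset.sum_image (s := Finset.univ) (g := F)
            (f := fun e => (((e.length + m - 1).choose (m - 1) : ℝ) *
              (((α ++ β).splitWrtComposition e).map a).prod))
            (fun x _ y _ hxy => hFinj hxy)).symm
        rw [himg]
        apply Finset.sum_le_sum_of_subset_of_nonneg (Finset.subset_univ _)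
        intro e _ _
        exact mul_nonneg (by positivity) (hprodnn (α ++ β) e)
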